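/- For every n = 0, 1, 2, …, (n+2) ∫₀^∞ h(v)^{n+1} dv ≤ α^n μ₂; equivalently, b_n ≤ 2 where b_n = 2(n+2) ∫₀^∞ h(v)^{n+1} dv / (α^{n+2}(1 + γ_s²)). (The upper estimate on Sathe's coefficients b_n, which yields the upper bound of formula (1.3).) -/

import Mathlib

open MeasureTheory Real Set Filter

/-- Upper estimate on Sathe's coefficients: for every `n`,
`(n+2) ∫₀^∞ h(v)^{n+1} dv ≤ αⁿ μ₂`, equivalently `b_n ≤ 2`. -/
theorem sathe_coefficients_upper_estimate
    (G : ℝ → ℝ)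
    (hmono : Monotone G)
    (hrc : ∀ v : ℝ, ContinuousWithinAt G (Set.Ici v) v)
    (hneg : ∀ v : ℝ, v < 0 → G v = 0)
    (hlim : Tendsto G atTop (nhds 1))
    (α μ₂ γ2 : ℝ)
    (hInt1 : IntegrableOn (fun v => 1 - G v) (Ioi 0))
    (hα : α = ∫ v in Ioi (0:ℝ), (1 - G v))
    (hαpos : 0 < α)
    (hInt2 : IntegrableOn (fun v => v * (1 - G v)) (Ioi 0))
    (hμ₂ : μ₂ = 2 * ∫ v in Ioi (0:ℝ), v * (1 - G v))
    (hγ : γ2 = μ₂ / α ^ 2 - 1)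
    (h : ℝ → ℝ)
    (hh : ∀ t : ℝ, h t = ∫ v in Ioi t, (1 - G v))
    (b : ℕ → ℝ)
    (hb : ∀ n : ℕ, b n =
      2 * (n + 2) * (∫ v in Ioi (0:ℝ), (h v) ^ (n + 1)) / (α ^ (n + 2) * (1 + γ2))) :
    ∀ n : ℕ,
      ((n : ℝ) + 2) * (∫ v in Ioi (0:ℝ), (h v) ^ (n + 1)) ≤ α ^ n * μ₂ ∧ b n ≤ 2 := by
  set f : ℝ → ℝ := fun v => 1 - G v with hf_def
  have hG1 : ∀ v, G v ≤ 1 := hmono.ge_of_tendsto hlim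
  have hG0 : ∀ v, 0 ≤ G v := by
    intro v
    rcases lt_or_ge v 0 with hv | hv
    · rw [hneg v hv]
    · calc (0:ℝ) = G (-1) := (hneg (-1) (by norm_num)).symm
        _ ≤ G v := hmono (by linarith)
  have hf0 : ∀ v, 0 ≤ f v := fun v => by simp only [hf_def, sub_nonneg]; exact hG1 v
  have hf1 : ∀ v, f v ≤ 1 := fun v => by
    simp only [hf_def]; linarith [hG0 v]
  have hfanti : Antitone f := fun s t hst => by
    simp only [hf_def]; linarith [hmono hst]
  have hfm : Measurable f := measurable_const.sub hmono.measurable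
  have hfint : ∀ t : ℝ, IntegrableOn f (Ioi t) := by
    intro t
    have h1 : IntegrableOn f (Ioc t 0) := by
      apply Measure.integrableOn_of_bounded (M := 1) measure_Ioc_lt_top.ne
        hfm.aestronglyMeasurable
      filter_upwards with x
      rw [Real.norm_eq_abs, abs_of_nonneg (hf0 x)]; exact hf1 x
    have : IntegrableOn f (Ioc t 0 ∪ Ioi 0) := h1.union hInt1
    exact this.mono_set (by
      intro x hx
      rcases le_or_gt x 0 with h' | h'
      · exact Or.inl ⟨hx, h'⟩
      · exact Or.inr h')
  -- basic facts about h
  have hdiffInt : ∀ s t : ℝ, s ≤ t → h s - h t = ∫ v in Ioc s t, f v := by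
    intro s t hst
    rw [hh s, hh t, ← Ioc_union_Ioi_eq_Ioi hst,
      setIntegral_union (Ioc_disjoint_Ioi le_rfl) measurableSet_Ioi
        ((hfint s).mono_set Ioc_subset_Ioi_self) (hfint t)]
    ring
  have hIocnn : ∀ s t : ℝ, 0 ≤ ∫ v in Ioc s t, f v := fun s t =>
    setIntegral_nonneg measurableSet_Ioc (fun x _ => hf0 x)
  have hanti : Antitone h := by
    intro s t hst
    have h1 := hdiffInt s t hst
    have h2 := hIocnn s t
    linarith
  have hhnn : ∀ t, 0 ≤ h t := fun t => by
    rw [hh t]; exact setIntegral_nonneg measurableSet_Ioi fun x _ => hf0 x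
  have hconstInt : ∀ (s t c : ℝ), IntegrableOn (fun _ => c) (Ioc s t) :=
    fun s t c => integrableOn_const measure_Ioc_lt_top.ne
  have hIocconst : ∀ (s t c : ℝ), s ≤ t → (∫ _ in Ioc s t, c) = (t - s) * c := by
    intro s t c hst
    rw [setIntegral_const, measureReal_def, Real.volume_Ioc, ENNReal.toReal_ofReal (by linarith), smul_eq_mul]
  have hIoc_ub : ∀ s t : ℝ, s ≤ t → (∫ v in Ioc s t, f v) ≤ t - s := by
    intro s t hst
    have h1 : (∫ v in Ioc s t, f v) ≤ ∫ _ in Ioc s t, (1:ℝ) :=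
      setIntegral_mono_on ((hfint s).mono_set Ioc_subset_Ioi_self)
        (hconstInt s t 1) measurableSet_Ioc (fun x _ => hf1 x)
    rw [hIocconst s t 1 hst] at h1
    linarith
  have hlip : LipschitzWith 1 h := by
    apply LipschitzWith.of_dist_le_mul
    have key : ∀ s t : ℝ, s ≤ t → dist (h s) (h t) ≤ 1 * dist s t := by
      intro s t hst
      rw [Real.dist_eq, Real.dist_eq, one_mul,
        abs_of_nonneg (by linarith [hdiffInt s t hst, hIocnn s t]),
        abs_of_nonpos (by linarith : s - t ≤ 0)]
      have := hIoc_ub s t hst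
      have := hdiffInt s t hst
      linarith
    intro s t
    rcases le_total s t with hst | hst
    · exact key s t hst
    · rw [dist_comm (h s) (h t), dist_comm s t]; exact key t s hst
  have hcont : Continuous h := hlip.continuous
  have hα0 : h 0 = α := by rw [hh 0, hα]
  have hhleα : ∀ t, 0 ≤ t → h t ≤ α := fun t ht => hα0 ▸ hanti ht
  -- right derivative of h
  have hderiv : ∀ x : ℝ, HasDerivWithinAt h (-(f x)) (Ioi x) x := by
    intro x
    rw [hasDerivWithinAt_iff_tendsto_slope]
    have hsd : Ioi x \ {x} = Ioi x := Set.diff_singleton_eq_self (by simp)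
    rw [hsd]
    have hfx : Tendsto (fun y => -(f y)) (nhdsWithin x (Ioi x)) (nhds (-(f x))) := by
      have h1 : Tendsto G (nhdsWithin x (Ici x)) (nhds (G x)) := hrc x
      have h2 := h1.mono_left (nhdsWithin_mono x Ioi_subset_Ici_self)
      have : Tendsto (fun y => -(1 - G y)) (nhdsWithin x (Ioi x)) (nhds (-(1 - G x))) :=
        (tendsto_const_nhds.sub h2).neg
      simpa [hf_def] using this
    refine tendsto_of_tendsto_of_tendsto_of_le_of_le' tendsto_const_nhds hfx ?_ ?_
    · filter_upwards [self_mem_nhdsWithin] with y hy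
      have hxy : x < y := hy
      have hub : h x - h y ≤ (y - x) * f x := by
        rw [hdiffInt x y hxy.le]
        calc (∫ v in Ioc x y, f v) ≤ ∫ _ in Ioc x y, f x :=
              setIntegral_mono_on ((hfint x).mono_set Ioc_subset_Ioi_self)
                (hconstInt x y (f x)) measurableSet_Ioc (fun v hv => hfanti hv.1.le)
          _ = (y - x) * f x := hIocconst x y (f x) hxy.le
      rw [slope_def_field, le_div_iff₀ (by linarith : (0:ℝ) < y - x)]
      nlinarith
    · filter_upwards [self_mem_nhdsWithin] with y hy
      have hxy : x < y := hy
      have hlb : (y - x) * f y ≤ h x - h y := by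
        rw [hdiffInt x y hxy.le]
        calc (y - x) * f y = ∫ _ in Ioc x y, f y := (hIocconst x y (f y) hxy.le).symm
          _ ≤ ∫ v in Ioc x y, f v :=
              setIntegral_mono_on (hconstInt x y (f y))
                ((hfint x).mono_set Ioc_subset_Ioi_self) measurableSet_Ioc
                (fun v hv => hfanti hv.2)
      rw [slope_def_field, div_le_iff₀ (by linarith : (0:ℝ) < y - x)]
      nlinarith
  -- tail of ∫ v f v
  set C0 : ℝ := ∫ v in Ioi (0:ℝ), v * f v with hC0
  have htail_eq : ∀ T : ℝ, 0 ≤ T →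
      (∫ v in Ioi T, v * f v) = C0 - ∫ v in Ioc 0 T, v * f v := by
    intro T hT
    rw [hC0, ← Ioc_union_Ioi_eq_Ioi hT,
      setIntegral_union (Ioc_disjoint_Ioi le_rfl) measurableSet_Ioi
        (hInt2.mono_set Ioc_subset_Ioi_self) (hInt2.mono_set (Ioi_subset_Ioi hT))]
    ring
  have htail0 : Tendsto (fun T => ∫ v in Ioi T, v * f v) atTop (nhds 0) := by
    have h1 : Tendsto (fun T => ∫ v in (0:ℝ)..T, v * f v) atTop (nhds C0) :=
      intervalIntegral_tendsto_integral_Ioi 0 hInt2 tendsto_id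
    have h2 : Tendsto (fun T => C0 - ∫ v in (0:ℝ)..T, v * f v) atTop (nhds (C0 - C0)) :=
      tendsto_const_nhds.sub h1
    rw [sub_self] at h2
    apply h2.congr'
    filter_upwards [eventually_ge_atTop (0:ℝ)] with T hT
    rw [intervalIntegral.integral_of_le hT, ← htail_eq T hT]
  have htail_nn : ∀ T : ℝ, 0 ≤ T → 0 ≤ ∫ v in Ioi T, v * f v := fun T hT =>
    setIntegral_nonneg measurableSet_Ioi fun x hx =>
      mul_nonneg (le_trans hT (le_of_lt hx)) (hf0 x)
  have htail_le : ∀ T : ℝ, 0 ≤ T → (∫ v in Ioi T, v * f v) ≤ C0 := by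
    intro T hT
    rw [htail_eq T hT]
    have : 0 ≤ ∫ v in Ioc 0 T, v * f v :=
      setIntegral_nonneg measurableSet_Ioc fun x hx => mul_nonneg hx.1.le (hf0 x)
    linarith
  have hC0nn : 0 ≤ C0 := htail_nn 0 le_rfl
  have hThT : ∀ T : ℝ, 0 ≤ T → T * h T ≤ ∫ v in Ioi T, v * f v := by
    intro T hT
    rw [hh T, ← integral_const_mul]
    exact setIntegral_mono_on ((hfint T).const_mul T)
      (hInt2.mono_set (Ioi_subset_Ioi hT)) measurableSet_Ioi
      (fun v hv => mul_le_mul_of_nonneg_right (le_of_lt hv) (hf0 v))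
  have hTh_le : ∀ (n : ℕ) (T : ℝ), 0 ≤ T →
      T * h T ^ (n+1) ≤ α ^ n * ∫ v in Ioi T, v * f v := by
    intro n T hT
    have h3 : h T ^ n ≤ α ^ n := pow_le_pow_left₀ (hhnn T) (hhleα T hT) n
    calc T * h T ^ (n+1) = (T * h T) * h T ^ n := by ring
      _ ≤ (∫ v in Ioi T, v * f v) * α ^ n :=
          mul_le_mul (hThT T hT) h3 (pow_nonneg (hhnn T) n) (htail_nn T hT)
      _ = α ^ n * ∫ v in Ioi T, v * f v := mul_comm _ _
  -- integrability of v * h^n * f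
  have hJint : ∀ n : ℕ, IntegrableOn (fun v => v * (h v ^ n * f v)) (Ioi 0) := by
    intro n
    apply Integrable.mono (hInt2.const_mul (α ^ n))
      ((measurable_id.mul ((hcont.measurable.pow_const n).mul hfm)).aestronglyMeasurable)
    filter_upwards [ae_restrict_mem measurableSet_Ioi] with v hv
    have hv0 : (0:ℝ) < v := hv
    have h1 : h v ^ n ≤ α ^ n := pow_le_pow_left₀ (hhnn v) (hhleα v hv0.le) n
    simp only [Real.norm_eq_abs, id_eq, Pi.mul_apply]
    rw [show (1:ℝ) - G v = f v from rfl,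
      abs_of_nonneg (mul_nonneg hv0.le (mul_nonneg (pow_nonneg (hhnn v) n) (hf0 v))),
      abs_of_nonneg (mul_nonneg (pow_nonneg hαpos.le n) (mul_nonneg hv0.le (hf0 v)))]
    show v * (h v ^ n * f v) ≤ α ^ n * (v * f v)
    calc v * (h v ^ n * f v) = h v ^ n * (v * f v) := by ring
      _ ≤ α ^ n * (v * f v) :=
          mul_le_mul_of_nonneg_right h1 (mul_nonneg hv0.le (hf0 v))
  have hJnn : ∀ n : ℕ, 0 ≤ ∫ v in Ioi (0:ℝ), v * (h v ^ n * f v) := fun n =>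
    setIntegral_nonneg measurableSet_Ioi fun v hv =>
      mul_nonneg (le_of_lt hv) (mul_nonneg (pow_nonneg (hhnn v) n) (hf0 v))
  -- key identity
  have key : ∀ n : ℕ, IntegrableOn (fun v => h v ^ (n+1)) (Ioi 0) ∧
      (∫ v in Ioi (0:ℝ), h v ^ (n+1)) =
        ((n:ℝ)+1) * ∫ v in Ioi (0:ℝ), v * (h v ^ n * f v) := by
    intro n
    have hΨderiv : ∀ x : ℝ, HasDerivWithinAt (fun v => v * h v ^ (n+1))
        (h x ^ (n+1) - ((n:ℝ)+1) * (x * (h x ^ n * f x))) (Ioi x) x := by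
      intro x
      have h1 := (hasDerivWithinAt_id x (Ioi x)).mul ((hderiv x).pow (n+1))
      have e : 1 * ((fun y => h y ^ (n+1)) x) + id x * ((↑(n+1) : ℝ) * h x ^ (n + 1 - 1) * -f x)
          = h x ^ (n+1) - ((n:ℝ)+1) * (x * (h x ^ n * f x)) := by
        simp only [Nat.add_sub_cancel, id_eq]
        push_cast
        ring
      exact e ▸ h1
    have hBint : ∀ T : ℝ, 0 ≤ T →
        IntervalIntegrable (fun v => v * (h v ^ n * f v)) volume 0 T := by
      intro T hT
      rw [intervalIntegrable_iff_integrableOn_Ioc_of_le hT]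
      exact (hJint n).mono_set Ioc_subset_Ioi_self
    have hAint : ∀ T : ℝ, IntervalIntegrable (fun v => h v ^ (n+1)) volume 0 T :=
      fun T => (hcont.pow (n+1)).intervalIntegrable 0 T
    have hFTC : ∀ T : ℝ, 0 ≤ T →
        (∫ v in (0:ℝ)..T, h v ^ (n+1)) =
          T * h T ^ (n+1) + ((n:ℝ)+1) * ∫ v in (0:ℝ)..T, v * (h v ^ n * f v) := by
      intro T hT
      have hcontΨ : ContinuousOn (fun v => v * h v ^ (n+1)) (Icc 0 T) :=
        (continuous_id.mul (hcont.pow (n+1))).continuousOn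
      have hgint : IntervalIntegrable
          (fun x => h x ^ (n+1) - ((n:ℝ)+1) * (x * (h x ^ n * f x))) volume 0 T :=
        (hAint T).sub ((hBint T hT).const_mul _)
      have hid := intervalIntegral.integral_eq_sub_of_hasDeriv_right_of_le hT hcontΨ
        (fun x _ => hΨderiv x) hgint
      rw [intervalIntegral.integral_sub (hAint T) ((hBint T hT).const_mul _),
        intervalIntegral.integral_const_mul] at hid
      have : (0:ℝ) * h 0 ^ (n+1) = 0 := by ring
      rw [this] at hid
      linarith [hid]
    have hbound : ∀ T : ℝ, 0 ≤ T → (∫ v in (0:ℝ)..T, h v ^ (n+1)) ≤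
        α ^ n * C0 + ((n:ℝ)+1) * ∫ v in Ioi (0:ℝ), v * (h v ^ n * f v) := by
      intro T hT
      rw [hFTC T hT]
      have h1 : T * h T ^ (n+1) ≤ α ^ n * C0 := by
        calc T * h T ^ (n+1) ≤ α ^ n * ∫ v in Ioi T, v * f v := hTh_le n T hT
          _ ≤ α ^ n * C0 :=
            mul_le_mul_of_nonneg_left (htail_le T hT) (pow_nonneg hαpos.le n)
      have h2 : (∫ v in (0:ℝ)..T, v * (h v ^ n * f v)) ≤
          ∫ v in Ioi (0:ℝ), v * (h v ^ n * f v) := by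
        rw [intervalIntegral.integral_of_le hT]
        apply setIntegral_mono_set (hJint n)
        · filter_upwards [ae_restrict_mem measurableSet_Ioi] with v hv
          exact mul_nonneg (le_of_lt hv) (mul_nonneg (pow_nonneg (hhnn v) n) (hf0 v))
        · exact HasSubset.Subset.eventuallyLE Ioc_subset_Ioi_self
      have h3 : ((n:ℝ)+1) * (∫ v in (0:ℝ)..T, v * (h v ^ n * f v)) ≤
          ((n:ℝ)+1) * ∫ v in Ioi (0:ℝ), v * (h v ^ n * f v) :=
        mul_le_mul_of_nonneg_left h2 (by positivity)
      linarith
    have hInt : IntegrableOn (fun v => h v ^ (n+1)) (Ioi 0) := by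
      apply integrableOn_Ioi_of_intervalIntegral_norm_bounded
        (α ^ n * C0 + ((n:ℝ)+1) * ∫ v in Ioi (0:ℝ), v * (h v ^ n * f v)) 0
        (b := fun T : ℝ => T) (fun T => (hcont.pow (n+1)).integrableOn_Ioc) tendsto_id
      filter_upwards [eventually_ge_atTop (0:ℝ)] with T hT
      have habs : ∀ v : ℝ, |h v| = h v := fun v => abs_of_nonneg (hhnn v)
      simp only [Real.norm_eq_abs, Pi.pow_apply, abs_pow, habs]
      exact hbound T hT
    have hlim1 : Tendsto (fun T : ℝ => ∫ v in (0:ℝ)..T, h v ^ (n+1)) atTop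
        (nhds (∫ v in Ioi (0:ℝ), h v ^ (n+1))) :=
      intervalIntegral_tendsto_integral_Ioi 0 hInt tendsto_id
    have hub : Tendsto (fun T : ℝ => α ^ n * ∫ v in Ioi T, v * f v) atTop
        (nhds (α ^ n * 0)) := htail0.const_mul _
    rw [mul_zero] at hub
    have hzero : Tendsto (fun T : ℝ => T * h T ^ (n+1)) atTop (nhds 0) := by
      apply tendsto_of_tendsto_of_tendsto_of_le_of_le' tendsto_const_nhds hub
      · filter_upwards [eventually_ge_atTop (0:ℝ)] with T hT
        exact mul_nonneg hT (pow_nonneg (hhnn T) _)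
      · filter_upwards [eventually_ge_atTop (0:ℝ)] with T hT
        exact hTh_le n T hT
    have hlim2 : Tendsto (fun T : ℝ => T * h T ^ (n+1) +
        ((n:ℝ)+1) * ∫ v in (0:ℝ)..T, v * (h v ^ n * f v)) atTop
        (nhds (0 + ((n:ℝ)+1) * ∫ v in Ioi (0:ℝ), v * (h v ^ n * f v))) :=
      hzero.add ((intervalIntegral_tendsto_integral_Ioi 0 (hJint n) tendsto_id).const_mul _)
    have hlim2' : Tendsto (fun T : ℝ => ∫ v in (0:ℝ)..T, h v ^ (n+1)) atTop
        (nhds (0 + ((n:ℝ)+1) * ∫ v in Ioi (0:ℝ), v * (h v ^ n * f v))) := by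
      apply hlim2.congr'
      filter_upwards [eventually_ge_atTop (0:ℝ)] with T hT
      exact (hFTC T hT).symm
    have := tendsto_nhds_unique hlim1 hlim2'
    rw [zero_add] at this
    exact ⟨hInt, this⟩
  -- pointwise convexity bound
  have hvf_le : ∀ v : ℝ, 0 < v → v * f v ≤ α - h v := by
    intro v hv
    have e : α - h v = ∫ u in Ioc 0 v, f u := by
      rw [← hα0]; exact hdiffInt 0 v hv.le
    rw [e]
    calc v * f v = (v - 0) * f v := by ring
      _ = ∫ _ in Ioc 0 v, f v := (hIocconst 0 v (f v) hv.le).symm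
      _ ≤ ∫ u in Ioc 0 v, f u :=
        setIntegral_mono_on (hconstInt 0 v (f v))
          ((hfint 0).mono_set Ioc_subset_Ioi_self) measurableSet_Ioc
          (fun u hu => hfanti hu.2)
  -- the recursion step
  have hstep : ∀ n : ℕ, (∫ v in Ioi (0:ℝ), v * (h v ^ (n+1) * f v)) ≤
      α * (∫ v in Ioi (0:ℝ), h v ^ (n+1)) - ∫ v in Ioi (0:ℝ), h v ^ (n+1+1) := by
    intro n
    have hint1 := (key n).1
    have hint2 := (key (n+1)).1
    have hrhs : IntegrableOn (fun v => α * h v ^ (n+1) - h v ^ (n+1+1)) (Ioi 0) :=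
      (hint1.const_mul α).sub hint2
    have hmain := setIntegral_mono_on (hJint (n+1)) hrhs measurableSet_Ioi (by
      intro v hv
      have hv0 : (0:ℝ) < v := hv
      calc v * (h v ^ (n+1) * f v) = h v ^ (n+1) * (v * f v) := by ring
        _ ≤ h v ^ (n+1) * (α - h v) :=
          mul_le_mul_of_nonneg_left (hvf_le v hv0) (pow_nonneg (hhnn v) _)
        _ = α * h v ^ (n+1) - h v ^ (n+1+1) := by ring)
    rw [integral_sub (hint1.const_mul α) hint2, integral_const_mul] at hmain
    exact hmain
  -- base case value
  have hI1 : (∫ v in Ioi (0:ℝ), h v ^ (0+1)) = μ₂ / 2 := by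
    have hk := (key 0).2
    simp only [pow_zero, one_mul, Nat.cast_zero, zero_add] at hk
    rw [hk, hμ₂]
    ring
  -- main induction
  have main : ∀ n : ℕ, ((n:ℝ)+2) * (∫ v in Ioi (0:ℝ), h v ^ (n+1)) ≤ α ^ n * μ₂ := by
    intro n
    induction n with
    | zero =>
      simp only [Nat.cast_zero, pow_zero, one_mul]
      rw [hI1]
      ring_nf
      exact le_rfl
    | succ n ih =>
      have h1 := (key (n+1)).2
      have h2 := hstep n
      set I1 := ∫ v in Ioi (0:ℝ), h v ^ (n+1) with hI1def
      set I2 := ∫ v in Ioi (0:ℝ), h v ^ (n+1+1) with hI2def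
      set J := ∫ v in Ioi (0:ℝ), v * (h v ^ (n+1) * f v) with hJdef
      have h4 : ((n:ℝ)+2) * J ≤ ((n:ℝ)+2) * (α * I1 - I2) :=
        mul_le_mul_of_nonneg_left h2 (by positivity)
      push_cast at h1
      have h5 : I2 ≤ ((n:ℝ)+2) * (α * I1 - I2) := by
        nlinarith [h4, h1]
      have h3 : α * (((n:ℝ)+2) * I1) ≤ α * (α ^ n * μ₂) :=
        mul_le_mul_of_nonneg_left ih hαpos.le
      rw [pow_succ]
      push_cast
      nlinarith [h5, h3]
  -- positivity of μ₂
  have hμ₂pos : 0 < μ₂ := by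
    obtain ⟨v0, hv00, hfv0⟩ : ∃ v, 0 < v ∧ 0 < f v := by
      by_contra hcon
      push_neg at hcon
      have hz : (∫ v in Ioi (0:ℝ), f v) = 0 := by
        rw [setIntegral_congr_fun measurableSet_Ioi
          (fun v hv => le_antisymm (hcon v hv) (hf0 v) : EqOn f (fun _ => (0:ℝ)) (Ioi 0))]
        simp
      exact hαpos.ne' (hα.trans hz)
    have hsub : Ioc (v0/2) v0 ⊆ Ioi (0:ℝ) := fun u hu => by
      simp only [mem_Ioi]; linarith [hu.1]
    have hlb : (v0 - v0/2) * (v0/2 * f v0) ≤ ∫ v in Ioc (v0/2) v0, v * f v := by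
      rw [← hIocconst (v0/2) v0 (v0/2 * f v0) (by linarith)]
      apply setIntegral_mono_on (hconstInt _ _ _) (hInt2.mono_set hsub) measurableSet_Ioc
      intro u hu
      exact mul_le_mul hu.1.le (hfanti hu.2) (hf0 v0) (by linarith [hu.1])
    have hup : (∫ v in Ioc (v0/2) v0, v * f v) ≤ C0 := by
      apply setIntegral_mono_set hInt2
      · filter_upwards [ae_restrict_mem measurableSet_Ioi] with v hv
        exact mul_nonneg (le_of_lt hv) (hf0 v)
      · exact HasSubset.Subset.eventuallyLE hsub
    have hC0pos : 0 < C0 := by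
      nlinarith [mul_pos (half_pos hv00) (mul_pos (half_pos hv00) hfv0)]
    have hμC : μ₂ = 2 * C0 := hμ₂
    linarith
  -- conclusion
  intro n
  refine ⟨main n, ?_⟩
  rw [hb n]
  have hα' : α ≠ 0 := hαpos.ne'
  have hden : α ^ (n+2) * (1 + γ2) = α ^ n * μ₂ := by
    rw [hγ]
    field_simp
    ring
  have hdenpos : 0 < α ^ n * μ₂ := mul_pos (pow_pos hαpos n) hμ₂pos
  rw [hden, div_le_iff₀ hdenpos]
  linarith [main n]
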